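/- Suppose there exists a t-(v,k,1)-design with k/2 + 1 < t ≤ k, and let t1, t2 be positive integers with max{t1, t2} < t and t1 + t2 = k. Then there exists a (K,F,Q,S) placement delivery array with K = b, F = C(v,t1), Q = C(v,t1) − C(k,t1), and S = C(v,t2), where b = C(v,t)/C(k,t). -/
import Mathlib


open Finset

/-- A `(K, F, Q, S)` placement delivery array: an `F × K` array with entries in
`[S] ∪ {*}` (where `none` plays the role of `*`) satisfying conditions C1, C2, C3. -/
def IsPDA {K F S : ℕ} (Q : ℕ) (P : Fin F → Fin K → Option (Fin S)) : Prop :=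
  -- C1: the symbol `*` appears exactly `Q` times in each column
  (∀ k : Fin K, (univ.filter fun j : Fin F => P j k = none).card = Q) ∧
  -- C2: each integer `s ∈ [S]` occurs at least once in the array
  (∀ s : Fin S, ∃ j k, P j k = some s) ∧
  -- C3
  (∀ (j₁ j₂ : Fin F) (k₁ k₂ : Fin K) (s : Fin S), (j₁, k₁) ≠ (j₂, k₂) →
    P j₁ k₁ = some s → P j₂ k₂ = some s →
    j₁ ≠ j₂ ∧ k₁ ≠ k₂ ∧ P j₁ k₂ = none ∧ P j₂ k₁ = none)

/-- There exists a `(K, F, Q, S)` placement delivery array. -/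
def ExistsPDA (K F Q S : ℕ) : Prop :=
  ∃ P : Fin F → Fin K → Option (Fin S), IsPDA Q P

/-- A `t`-`(v,k,1)` design (Steiner system `S(t,k,v)`): `V` is a `v`-set, each block
is a `k`-subset of `V`, and every `t`-subset of `V` lies in exactly one block. -/
def IsSteinerSystem {V : Type} [Fintype V] [DecidableEq V] (B : Finset (Finset V))
    (t v k : ℕ) : Prop :=
  Fintype.card V = v ∧ (∀ blk ∈ B, blk.card = k) ∧
  (∀ T : Finset V, T.card = t → (B.filter fun blk => T ⊆ blk).card = 1)

/-- Transfer a PDA structure over arbitrary finite types to one over `Fin` types. -/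
lemma existsPDA_of_equiv {K F Q S : ℕ} {α β γ : Type} [DecidableEq γ]
    [Fintype α] [Fintype β] [Fintype γ]
    (eF : Fin F ≃ α) (eK : Fin K ≃ β) (eS : Fin S ≃ γ) (P : α → β → Option γ)
    (h1 : ∀ b : β, (univ.filter fun a : α => P a b = none).card = Q)
    (h2 : ∀ c : γ, ∃ a b, P a b = some c)
    (h3 : ∀ (a₁ a₂ : α) (b₁ b₂ : β) (c : γ), (a₁, b₁) ≠ (a₂, b₂) →
      P a₁ b₁ = some c → P a₂ b₂ = some c →
      a₁ ≠ a₂ ∧ b₁ ≠ b₂ ∧ P a₁ b₂ = none ∧ P a₂ b₁ = none) :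
    ExistsPDA K F Q S := by
  classical
  refine ⟨fun j k => (P (eF j) (eK k)).map eS.symm, ?_, ?_, ?_⟩
  · intro k
    rw [← h1 (eK k)]
    apply Finset.card_bij' (fun j _ => eF j) (fun a _ => eF.symm a)
    · intro j hj
      simp only [mem_filter, mem_univ, true_and] at hj ⊢
      simpa using hj
    · intro a ha
      simp only [mem_filter, mem_univ, true_and] at ha ⊢
      simpa using ha
    · intro j _; simp
    · intro a _; simp
  · intro s
    obtain ⟨a, b, hab⟩ := h2 (eS s)
    exact ⟨eF.symm a, eK.symm b, by simp [hab]⟩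
  · intro j₁ j₂ k₁ k₂ s hne hp1 hp2
    have hp1' : P (eF j₁) (eK k₁) = some (eS s) := by
      rw [Option.map_eq_some_iff] at hp1
      obtain ⟨c, hc, hcs⟩ := hp1
      rw [hc]; congr 1; rw [← hcs]; simp
    have hp2' : P (eF j₂) (eK k₂) = some (eS s) := by
      rw [Option.map_eq_some_iff] at hp2
      obtain ⟨c, hc, hcs⟩ := hp2
      rw [hc]; congr 1; rw [← hcs]; simp
    have hne' : (eF j₁, eK k₁) ≠ (eF j₂, eK k₂) := by
      intro h
      apply hne
      rw [Prod.ext_iff] at h ⊢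
      exact ⟨eF.injective h.1, eK.injective h.2⟩
    obtain ⟨ha, hb, hn1, hn2⟩ := h3 _ _ _ _ _ hne' hp1' hp2'
    refine ⟨fun h => ha (by rw [h]), fun h => hb (by rw [h]), ?_, ?_⟩
    · simp [hn1]
    · simp [hn2]

/-- Steiner-system construction (`k/2 + 1 < t ≤ k`), parameter set 3: a `t`-`(v,k,1)`
design with `k/2 + 1 < t ≤ k`, and positive `t1, t2` with `max{t1,t2} < t` and
`t1 + t2 = k`, yields a PDA with `K = b = C(v,t)/C(k,t)`, `F = C(v,t1)`,
`Q = C(v,t1) - C(k,t1)`, `S = C(v,t2)`. -/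
theorem exists_pda_of_steiner_large_t_three {V : Type} [Fintype V] [DecidableEq V]
    (B : Finset (Finset V)) (t v k t1 t2 : ℕ) (ht : 0 < t) (htk : t ≤ k) (hkv : k < v)
    (hdes : IsSteinerSystem B t v k)
    (ht2 : k + 2 < 2 * t) (ht1pos : 0 < t1) (ht2pos : 0 < t2)
    (hmax : max t1 t2 < t) (hsum : t1 + t2 = k) :
    ExistsPDA (Nat.choose v t / Nat.choose k t) (Nat.choose v t1)
      (Nat.choose v t1 - Nat.choose k t1) (Nat.choose v t2) := by
  classical
  obtain ⟨hcardV, hblk, hdesign⟩ := hdes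
  have hcu : (univ : Finset V).card = v := by simpa using hcardV
  -- counting the number of blocks
  have hbcount : B.card * Nat.choose k t = Nat.choose v t := by
    have key : ∑ T ∈ univ.powersetCard t, (B.filter fun blk => T ⊆ blk).card
        = (univ.powersetCard t : Finset (Finset V)).card := by
      rw [Finset.card_eq_sum_ones]
      refine Finset.sum_congr rfl fun T hT => ?_
      exact hdesign T (Finset.mem_powersetCard_univ.mp hT)
    have swap : ∑ T ∈ univ.powersetCard t, (B.filter fun blk => T ⊆ blk).card
        = ∑ blk ∈ B, ((univ.powersetCard t : Finset (Finset V)).filter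
            fun T => T ⊆ blk).card := by
      simp only [Finset.card_filter]
      exact Finset.sum_comm
    have inner : ∀ blk ∈ B, ((univ.powersetCard t : Finset (Finset V)).filter
        fun T => T ⊆ blk).card = Nat.choose k t := by
      intro blk hb
      have : ((univ.powersetCard t : Finset (Finset V)).filter fun T => T ⊆ blk)
          = blk.powersetCard t := by
        ext s
        simp only [Finset.mem_filter, Finset.mem_powersetCard_univ,
          Finset.mem_powersetCard, Finset.subset_univ, true_and]
        tauto
      rw [this, Finset.card_powersetCard, hblk blk hb]
    rw [swap, Finset.sum_congr rfl inner, Finset.sum_const, smul_eq_mul] at key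
    rw [key, Finset.card_powersetCard, hcu]
  have hchoosekt : 0 < Nat.choose k t := Nat.choose_pos htk
  have hcardB : B.card = Nat.choose v t / Nat.choose k t :=
    (Nat.div_eq_of_eq_mul_left hchoosekt hbcount.symm).symm
  -- the index types
  set α := {x : Finset V // x ∈ (univ : Finset V).powersetCard t1} with hα
  set β := {x : Finset V // x ∈ B} with hβ
  set γ := {x : Finset V // x ∈ (univ : Finset V).powersetCard t2} with hγ
  have hcα : Fintype.card α = Nat.choose v t1 := by
    rw [Fintype.card_coe, Finset.card_powersetCard, hcu]
  have hcβ : Fintype.card β = Nat.choose v t / Nat.choose k t := by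
    rw [Fintype.card_coe, hcardB]
  have hcγ : Fintype.card γ = Nat.choose v t2 := by
    rw [Fintype.card_coe, Finset.card_powersetCard, hcu]
  have eF : Fin (Nat.choose v t1) ≃ α := (Fintype.equivFinOfCardEq hcα).symm
  have eK : Fin (Nat.choose v t / Nat.choose k t) ≃ β :=
    (Fintype.equivFinOfCardEq hcβ).symm
  have eS : Fin (Nat.choose v t2) ≃ γ := (Fintype.equivFinOfCardEq hcγ).symm
  have hmemα : ∀ x : α, (x : Finset V).card = t1 := fun x =>
    Finset.mem_powersetCard_univ.mp x.2
  have hmemγ : ∀ x : γ, (x : Finset V).card = t2 := fun x =>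
    Finset.mem_powersetCard_univ.mp x.2
  have hblkβ : ∀ x : β, (x : Finset V).card = k := fun x => hblk x.1 x.2
  -- the PDA
  set P : α → β → Option γ := fun T blk =>
    if h : (T : Finset V) ⊆ (blk : Finset V) then
      some ⟨(blk : Finset V) \ (T : Finset V), by
        rw [Finset.mem_powersetCard_univ, Finset.card_sdiff_of_subset h, hblkβ blk, hmemα T,
          ← hsum, Nat.add_sub_cancel_left]⟩
    else none with hP
  have hPnone : ∀ (T : α) (blk : β), P T blk = none ↔ ¬ (T : Finset V) ⊆ blk := by
    intro T blk
    by_cases h : (T : Finset V) ⊆ blk <;> simp [hP, h]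
  have hPsome : ∀ (T : α) (blk : β) (c : γ), P T blk = some c →
      (T : Finset V) ⊆ blk ∧ (blk : Finset V) \ T = c := by
    intro T blk c hc
    by_cases h : (T : Finset V) ⊆ blk
    · refine ⟨h, ?_⟩
      simp only [hP, dif_pos h] at hc
      exact congrArg Subtype.val (Option.some_injective _ hc)
    · simp [hP, dif_neg h] at hc
  apply existsPDA_of_equiv eF eK eS P
  · -- C1
    intro blk
    have hsplit := Finset.card_filter_add_card_filter_not
      (s := (univ : Finset α)) (p := fun T : α => (T : Finset V) ⊆ blk)
    have hsub : (univ.filter fun T : α => (T : Finset V) ⊆ blk).card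
        = Nat.choose k t1 := by
      rw [← hblkβ blk, ← Finset.card_powersetCard]
      refine Finset.card_bij (fun T _ => (T : Finset V)) ?_ ?_ ?_
      · intro T hT
        rw [Finset.mem_filter] at hT
        exact Finset.mem_powersetCard.mpr ⟨hT.2, hmemα T⟩
      · intro T₁ _ T₂ _ h
        exact Subtype.ext h
      · intro s hs
        rw [Finset.mem_powersetCard] at hs
        exact ⟨⟨s, Finset.mem_powersetCard_univ.mpr hs.2⟩,
          Finset.mem_filter.mpr ⟨Finset.mem_univ _, hs.1⟩, rfl⟩
    have hfe : (univ.filter fun T : α => P T blk = none)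
        = univ.filter fun T : α => ¬ (T : Finset V) ⊆ blk := by
      apply Finset.filter_congr
      intro T _
      simp [hPnone T blk]
    have hcard_univ : (univ : Finset α).card = Nat.choose v t1 := by
      rw [Finset.card_univ, hcα]
    rw [hfe]
    omega
  · -- C2
    intro c
    have hc2 : (c : Finset V).card = t2 := hmemγ c
    have ht2t : t2 < t := lt_of_le_of_lt (le_max_right t1 t2) hmax
    have htv : t ≤ v := le_trans htk (le_of_lt hkv)
    obtain ⟨T, hcT, hTu, hTcard⟩ := Finset.exists_subsuperset_card_eq (n := t)
      (Finset.subset_univ (c : Finset V)) (by omega) (by rw [hcu]; exact htv)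
    have := hdesign T hTcard
    rw [Finset.card_eq_one] at this
    obtain ⟨blk, hblk1⟩ := this
    have hblkB : blk ∈ B ∧ T ⊆ blk := by
      have : blk ∈ B.filter fun b => T ⊆ b := hblk1 ▸ Finset.mem_singleton_self blk
      exact Finset.mem_filter.mp this
    have hcblk : (c : Finset V) ⊆ blk := le_trans hcT hblkB.2
    have hrow : (blk \ (c : Finset V)) ∈ (univ : Finset V).powersetCard t1 := by
      rw [Finset.mem_powersetCard_univ, Finset.card_sdiff_of_subset hcblk,
        hblk blk hblkB.1, hc2, ← hsum, Nat.add_sub_cancel]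
    refine ⟨⟨blk \ (c : Finset V), hrow⟩, ⟨blk, hblkB.1⟩, ?_⟩
    have hsub : blk \ (c : Finset V) ⊆ blk := Finset.sdiff_subset
    simp only [hP, dif_pos hsub]
    congr 1
    exact Subtype.ext (Finset.sdiff_sdiff_eq_self hcblk)
  · -- C3
    intro a₁ a₂ b₁ b₂ c hne hp1 hp2
    obtain ⟨hs1, he1⟩ := hPsome _ _ _ hp1
    obtain ⟨hs2, he2⟩ := hPsome _ _ _ hp2
    have hu1 : (a₁ : Finset V) ∪ (c : Finset V) = b₁ := by
      rw [← he1]; exact Finset.union_sdiff_of_subset hs1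
    have hu2 : (a₂ : Finset V) ∪ (c : Finset V) = b₂ := by
      rw [← he2]; exact Finset.union_sdiff_of_subset hs2
    have hr1 : (b₁ : Finset V) \ (c : Finset V) = a₁ := by
      rw [← he1]; exact Finset.sdiff_sdiff_eq_self hs1
    have hr2 : (b₂ : Finset V) \ (c : Finset V) = a₂ := by
      rw [← he2]; exact Finset.sdiff_sdiff_eq_self hs2
    have hbne : b₁ ≠ b₂ := by
      intro h
      apply hne
      have : a₁ = a₂ := Subtype.ext (by rw [← hr1, ← hr2, h])
      rw [this, h]
    have hane : a₁ ≠ a₂ := by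
      intro h
      apply hbne
      exact Subtype.ext (by rw [← hu1, ← hu2, h])
    have hnsub : ∀ (x y : β), x ≠ y → ¬ (x : Finset V) ⊆ (y : Finset V) := by
      intro x y hxy hsub
      apply hxy
      apply Subtype.ext
      apply Finset.eq_of_subset_of_card_le hsub
      rw [hblkβ x, hblkβ y]
    refine ⟨hane, hbne, ?_, ?_⟩
    · rw [hPnone]
      intro hsub
      apply hnsub b₁ b₂ hbne
      rw [← hu1]
      exact Finset.union_subset hsub (le_trans (by rw [← he2]; exact Finset.sdiff_subset) le_rfl)
    · rw [hPnone]
      intro hsub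
      apply hnsub b₂ b₁ hbne.symm
      rw [← hu2]
      exact Finset.union_subset hsub (by rw [← he1]; exact Finset.sdiff_subset)
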